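/- arXiv:1108.1888 — 4 statements merged into one kernel-verified Lean document; each statement's English description precedes it below -/
import Mathlib

section
/- Let p be a polynomial with complex coefficients. Suppose that for every real number t the equation p(z) = i·t has exactly one solution z ∈ ℂ. Then p has degree exactly 1. -/
/-- If a complex polynomial takes each purely imaginary value `i·t` (for `t : ℝ`)
exactly once, then it has degree exactly 1. -/
theorem polynomial_unique_imaginary_values_degree_one (p : Polynomial ℂ)
    (huniq : ∀ t : ℝ, ∃! z : ℂ, p.eval z = Complex.I * t) :
    p.degree = 1 := by
  classical
  choose z hz hzu using huniq
  have hp0 : p ≠ 0 := by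
    rintro rfl
    have h1 := hz 1
    simp only [Polynomial.eval_zero, Complex.ofReal_one, mul_one] at h1
    exact Complex.I_ne_zero h1.symm
  -- p is not constant
  have hdeg1 : 1 ≤ p.degree := by
    by_contra h
    push_neg at h
    have hc := Polynomial.eq_C_of_degree_le_zero (Order.le_of_lt_succ h)
    have h0 := hz 0
    have h1 := hz 1
    rw [hc] at h0 h1
    simp only [Polynomial.eval_C] at h0 h1
    rw [h0] at h1
    simp only [Complex.ofReal_zero, Complex.ofReal_one, mul_zero, mul_one] at h1
    exact Complex.I_ne_zero h1.symm
  -- natDegree ≤ 1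
  have hinj : Function.Injective z := by
    intro s t hst
    have : Complex.I * s = Complex.I * t := by rw [← hz s, ← hz t, hst]
    have := mul_left_cancel₀ Complex.I_ne_zero this
    exact_mod_cast Complex.ofReal_inj.mp this
  have hle : p.natDegree ≤ 1 := by
    by_contra h
    push_neg at h
    -- each z t is a root of p.derivative
    have hroot : ∀ t : ℝ, p.derivative.IsRoot (z t) := by
      intro t
      set q := p - Polynomial.C (Complex.I * t) with hq
      have hqdeg : q.natDegree = p.natDegree := by
        rw [hq]
        exact Polynomial.natDegree_sub_C
      have hq0 : q ≠ 0 := fun h0 => by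
        rw [h0, Polynomial.natDegree_zero] at hqdeg; omega
      have hcard : Multiset.card q.roots = q.natDegree :=
        (Polynomial.splits_iff_card_roots.mp (IsAlgClosed.splits q))
      have hall : ∀ w ∈ q.roots, w = z t := by
        intro w hw
        have hwr : q.eval w = 0 := (Polynomial.mem_roots hq0).mp hw
        apply hzu
        rw [hq] at hwr
        simp at hwr
        linear_combination hwr
      have hcount : q.roots.count (z t) = q.natDegree := by
        rw [← hcard]
        rw [Multiset.eq_replicate_card.mpr hall]
        simp
      have hmult : 1 < q.rootMultiplicity (z t) := by
        rw [← Polynomial.count_roots, hcount, hqdeg]; exact h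
      have := Polynomial.isRoot_iterate_derivative_of_lt_rootMultiplicity (n := 1) hmult
      simpa [hq] using this
    have hdz : p.derivative = 0 := by
      apply Polynomial.eq_zero_of_infinite_isRoot
      apply Set.infinite_of_injective_forall_mem (f := z) hinj
      intro t; exact hroot t
    have := Polynomial.natDegree_eq_zero_of_derivative_eq_zero hdz
    omega
  have := Polynomial.degree_le_natDegree (p := p)
  rw [Polynomial.degree_eq_natDegree hp0] at hdeg1 ⊢
  interval_cases h : p.natDegree
  · exact absurd hdeg1 (by simp)
  · rfl
end

section
/- Let g : ℝ → ℝ be differentiable at every point of (0, ∞), nonnegative on (0, ∞), bounded above on (0, ∞), and satisfy t·g'(t) ≥ g(t) for all t > 0. Then g(t) = 0 for all t > 0. -/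
/-- If `g` is differentiable on `(0, ∞)`, nonnegative and bounded above on `(0, ∞)`,
and satisfies `t * g'(t) ≥ g(t)` there, then `g` vanishes on `(0, ∞)`. -/
theorem eq_zero_of_bounded_nonneg_mul_deriv_ge (g : ℝ → ℝ)
    (hdiff : ∀ t : ℝ, 0 < t → DifferentiableAt ℝ g t)
    (hnonneg : ∀ t : ℝ, 0 < t → 0 ≤ g t)
    (hbdd : BddAbove (g '' Set.Ioi (0 : ℝ)))
    (hineq : ∀ t : ℝ, 0 < t → t * deriv g t ≥ g t) :
    ∀ t : ℝ, 0 < t → g t = 0 := by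
  -- h(t) = g(t)/t is monotone on (0,∞)
  set h : ℝ → ℝ := fun t => g t / t with hh
  have hderiv : ∀ x : ℝ, 0 < x → HasDerivAt h ((deriv g x * x - g x * 1) / x ^ 2) x := by
    intro x hx
    exact ((hdiff x hx).hasDerivAt).div (hasDerivAt_id x) hx.ne'
  have hmono : MonotoneOn h (Set.Ioi (0 : ℝ)) := by
    apply monotoneOn_of_deriv_nonneg (convex_Ioi 0)
    · intro x hx
      exact ((hderiv x hx).differentiableAt).continuousAt.continuousWithinAt
    · intro x hx
      rw [interior_Ioi] at hx
      exact (hderiv x hx).differentiableAt.differentiableWithinAt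
    · intro x hx
      rw [interior_Ioi] at hx
      rw [(hderiv x hx).deriv]
      apply div_nonneg _ (sq_nonneg x)
      have := hineq x hx
      nlinarith
  intro t ht
  by_contra hne
  have hgt : 0 < g t := lt_of_le_of_ne (hnonneg t ht) (Ne.symm hne)
  set c : ℝ := g t / t with hc
  have hcpos : 0 < c := div_pos hgt ht
  obtain ⟨M, hM⟩ := hbdd
  -- pick large s
  set s : ℝ := max t ((M + 1) / c) with hs
  have hst : t ≤ s := le_max_left _ _
  have hspos : 0 < s := lt_of_lt_of_le ht hst
  have hmle : c ≤ h s := hmono ht hspos hst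
  have hgs : g s ≥ c * s := by
    have := hmle
    rw [hh] at this
    simp only at this
    calc c * s ≤ (g s / s) * s := by
          apply mul_le_mul_of_nonneg_right this hspos.le
      _ = g s := by field_simp
  have hMs : g s ≤ M := hM ⟨s, hspos, rfl⟩
  have hsge : (M + 1) / c ≤ s := le_max_right _ _
  have : M + 1 ≤ c * s := by
    rw [div_le_iff₀ hcpos] at hsge
    linarith [hsge]
  linarith
end

section
/- Let h : ℝ² → ℝ be a twice continuously differentiable function such that Δh(x) ≥ ‖∇h(x)‖ / ‖x‖ for every x ≠ 0, and such that Δh is integrable over ℝ² with respect to Lebesgue measure (note Δh ≥ 0 everywhere by the hypothesis and continuity). Then h is constant. -/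
open MeasureTheory

/-- The Euclidean Laplacian of `h : ℝ² → ℝ`: the sum of the unmixed second
partial derivatives in the standard coordinate directions. -/
noncomputable def euclideanLaplacian (h : EuclideanSpace ℝ (Fin 2) → ℝ)
    (x : EuclideanSpace ℝ (Fin 2)) : ℝ :=
  ∑ i : Fin 2,
    iteratedFDeriv ℝ 2 h x ![EuclideanSpace.single i (1 : ℝ), EuclideanSpace.single i (1 : ℝ)]

namespace ClgAux

open Set

/-- The canonical continuous linear identification of `ℝ × ℝ` with `ℝ²`. -/
noncomputable def toE2 : (ℝ × ℝ) ≃L[ℝ] EuclideanSpace ℝ (Fin 2) :=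
  (ContinuousLinearEquiv.finTwoArrow ℝ ℝ).symm.trans
    (EuclideanSpace.equiv (Fin 2) ℝ).symm

lemma toE2_apply (p : ℝ × ℝ) (i : Fin 2) : toE2 p i = ![p.1, p.2] i := by
  fin_cases i <;> rfl

lemma toE2_mp : MeasurePreserving (toE2 : ℝ × ℝ → EuclideanSpace ℝ (Fin 2)) volume volume := by
  have h1 := (volume_preserving_finTwoArrow ℝ).symm
  have h2 := (EuclideanSpace.volume_preserving_symm_measurableEquiv_toLp (Fin 2)).symm
  have : (toE2 : ℝ × ℝ → EuclideanSpace ℝ (Fin 2)) =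
      (MeasurableEquiv.toLp 2 (Fin 2 → ℝ)) ∘ (MeasurableEquiv.finTwoArrow).symm := rfl
  rw [this]
  exact h2.comp h1

lemma toE2_single0 : toE2 (1, 0) = EuclideanSpace.single (0 : Fin 2) (1 : ℝ) := by
  ext i; fin_cases i <;> simp [toE2_apply]

lemma toE2_single1 : toE2 (0, 1) = EuclideanSpace.single (1 : Fin 2) (1 : ℝ) := by
  ext i; fin_cases i <;> simp [toE2_apply]

lemma toE2_norm (p : ℝ × ℝ) : ‖toE2 p‖ = Real.sqrt (p.1 ^ 2 + p.2 ^ 2) := by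
  rw [EuclideanSpace.norm_eq]
  congr 1
  simp [Fin.sum_univ_two, toE2_apply, sq_abs]

/-- The partial derivative of `h` in the `i`-th coordinate direction, read on `ℝ × ℝ`. -/
noncomputable def pd (h : EuclideanSpace ℝ (Fin 2) → ℝ) (i : Fin 2) (p : ℝ × ℝ) : ℝ :=
  fderiv ℝ h (toE2 p) (EuclideanSpace.single i 1)

lemma lap_eq (h : EuclideanSpace ℝ (Fin 2) → ℝ) (z : EuclideanSpace ℝ (Fin 2)) :
    euclideanLaplacian h z =
      fderiv ℝ (fderiv ℝ h) z (EuclideanSpace.single 0 1) (EuclideanSpace.single 0 1)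
      + fderiv ℝ (fderiv ℝ h) z (EuclideanSpace.single 1 1) (EuclideanSpace.single 1 1) := by
  rw [euclideanLaplacian, Fin.sum_univ_two, iteratedFDeriv_two_apply, iteratedFDeriv_two_apply]
  simp

variable {h : EuclideanSpace ℝ (Fin 2) → ℝ}

lemma cont_pd (hsmooth : ContDiff ℝ 2 h) (i : Fin 2) : Continuous (pd h i) :=
  ((hsmooth.continuous_fderiv two_ne_zero).comp toE2.continuous).clm_apply continuous_const

lemma cont_lap (hsmooth : ContDiff ℝ 2 h) : Continuous (euclideanLaplacian h) := by
  have hD : Continuous (fderiv ℝ (fderiv ℝ h)) :=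
    (hsmooth.fderiv_right (m := 1) (by norm_num)).continuous_fderiv one_ne_zero
  have e : euclideanLaplacian h = fun z =>
      fderiv ℝ (fderiv ℝ h) z (EuclideanSpace.single 0 1) (EuclideanSpace.single 0 1)
      + fderiv ℝ (fderiv ℝ h) z (EuclideanSpace.single 1 1) (EuclideanSpace.single 1 1) :=
    funext (lap_eq h)
  rw [e]
  exact ((hD.clm_apply continuous_const).clm_apply continuous_const).add
    ((hD.clm_apply continuous_const).clm_apply continuous_const)

/-- The full derivative of `pd h i`. -/
noncomputable def pd' (h : EuclideanSpace ℝ (Fin 2) → ℝ) (i : Fin 2) (p : ℝ × ℝ) :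
    (ℝ × ℝ) →L[ℝ] ℝ :=
  ((ContinuousLinearMap.apply ℝ ℝ (EuclideanSpace.single i 1)).comp
    (fderiv ℝ (fderiv ℝ h) (toE2 p))).comp (toE2 : (ℝ × ℝ) →L[ℝ] _)

lemma hasFDerivAt_pd (hsmooth : ContDiff ℝ 2 h) (i : Fin 2) (p : ℝ × ℝ) :
    HasFDerivAt (pd h i) (pd' h i p) p := by
  have h1 : HasFDerivAt (fderiv ℝ h) (fderiv ℝ (fderiv ℝ h) (toE2 p)) (toE2 p) :=
    ((hsmooth.fderiv_right (m := 1) (by norm_num)).differentiable one_ne_zero _).hasFDerivAt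
  exact ((ContinuousLinearMap.apply ℝ ℝ (EuclideanSpace.single i 1)).hasFDerivAt.comp p
    (h1.comp p (toE2.hasFDerivAt)))

lemma pd'_apply (i : Fin 2) (p q : ℝ × ℝ) :
    pd' h i p q = fderiv ℝ (fderiv ℝ h) (toE2 p) (toE2 q) (EuclideanSpace.single i 1) := rfl

lemma fderiv_eq_inner (z v : EuclideanSpace ℝ (Fin 2)) :
    fderiv ℝ h z v = inner ℝ (gradient h z) v := by
  rw [gradient, InnerProductSpace.toDual_symm_apply]

/-- `Δh ≥ 0` everywhere, by continuity. -/
lemma lap_nonneg (hsmooth : ContDiff ℝ 2 h)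
    (hineq : ∀ x : EuclideanSpace ℝ (Fin 2), x ≠ 0 →
      euclideanLaplacian h x ≥ ‖gradient h x‖ / ‖x‖) (z : EuclideanSpace ℝ (Fin 2)) :
    0 ≤ euclideanLaplacian h z := by
  have hc : IsClosed {w : EuclideanSpace ℝ (Fin 2) | 0 ≤ euclideanLaplacian h w} :=
    isClosed_le continuous_const (cont_lap hsmooth)
  have hsub : ({0}ᶜ : Set (EuclideanSpace ℝ (Fin 2))) ⊆
      {w | 0 ≤ euclideanLaplacian h w} := fun w hw =>
    le_trans (div_nonneg (norm_nonneg _) (norm_nonneg _)) (hineq w hw)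
  have hd : Dense ({0}ᶜ : Set (EuclideanSpace ℝ (Fin 2))) := dense_compl_singleton 0
  exact hc.closure_subset_iff.2 hsub (hd z)

/-- Pointwise bound for partial derivatives on the boundary. -/
lemma pd_le (hineq : ∀ x : EuclideanSpace ℝ (Fin 2), x ≠ 0 →
      euclideanLaplacian h x ≥ ‖gradient h x‖ / ‖x‖)
    (hnn : ∀ z, 0 ≤ euclideanLaplacian h z)
    {c : ℝ} (i : Fin 2) (p : ℝ × ℝ) (hp : p ≠ 0) (hpc : ‖toE2 p‖ ≤ c) :
    |pd h i p| ≤ c * euclideanLaplacian h (toE2 p) := by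
  have hz : (toE2 p : EuclideanSpace ℝ (Fin 2)) ≠ 0 := by
    intro hc
    apply hp
    have := congrArg toE2.symm hc
    simpa using this
  have hzpos : 0 < ‖toE2 p‖ := norm_pos_iff.2 hz
  have h1 : |pd h i p| ≤ ‖gradient h (toE2 p)‖ := by
    rw [pd, fderiv_eq_inner]
    calc |inner ℝ (gradient h (toE2 p)) (EuclideanSpace.single i (1 : ℝ))|
        ≤ ‖gradient h (toE2 p)‖ * ‖EuclideanSpace.single i (1 : ℝ)‖ := abs_real_inner_le_norm _ _
      _ = ‖gradient h (toE2 p)‖ := by simp [EuclideanSpace.norm_single]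
  have h2 := hineq _ hz
  have h3 : ‖gradient h (toE2 p)‖ ≤ ‖toE2 p‖ * euclideanLaplacian h (toE2 p) :=
    (div_le_iff₀' hzpos).1 h2
  refine h1.trans (h3.trans ?_)
  exact mul_le_mul_of_nonneg_right hpc (hnn _)

end ClgAux


set_option maxHeartbeats 1000000 in
open ClgAux Set in
/-- If `h : ℝ² → ℝ` is `C²`, satisfies `Δh(x) ≥ ‖∇h(x)‖ / ‖x‖` for every `x ≠ 0`,
and `Δh` is Lebesgue integrable on `ℝ²`, then `h` is constant. -/
theorem constant_of_laplacian_ge_grad_div_norm (h : EuclideanSpace ℝ (Fin 2) → ℝ)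
    (hsmooth : ContDiff ℝ 2 h)
    (hineq : ∀ x : EuclideanSpace ℝ (Fin 2), x ≠ 0 →
      euclideanLaplacian h x ≥ ‖gradient h x‖ / ‖x‖)
    (hint : Integrable (euclideanLaplacian h) volume) :
    ∀ x y : EuclideanSpace ℝ (Fin 2), h x = h y := by
  classical
  have hFcont : Continuous (fun p : ℝ × ℝ => euclideanLaplacian h (toE2 p)) :=
    (cont_lap hsmooth).comp toE2.continuous
  set F : ℝ × ℝ → ℝ := fun p => euclideanLaplacian h (toE2 p) with hFdef
  have hnn : ∀ z, 0 ≤ euclideanLaplacian h z := lap_nonneg hsmooth hineq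
  have hFnn : ∀ p, 0 ≤ F p := fun p => hnn _
  have hFint : Integrable F volume :=
    (toE2_mp.integrable_comp_emb toE2.toHomeomorph.measurableEmbedding).2 hint
  -- Step 1: divergence theorem on the square `[-R, R]²`.
  have hdiv : ∀ R : ℝ, 0 ≤ R →
      (∫ p in Icc ((-R, -R) : ℝ × ℝ) ((R, R) : ℝ × ℝ), F p) =
        (((∫ x in (-R)..R, pd h 1 (x, R)) - ∫ x in (-R)..R, pd h 1 (x, -R)) +
          ∫ y in (-R)..R, pd h 0 (R, y)) - ∫ y in (-R)..R, pd h 0 (-R, y) := by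
    intro R hR
    have hle : ((-R, -R) : ℝ × ℝ) ≤ (R, R) := ⟨by dsimp; linarith, by dsimp; linarith⟩
    have hid : (fun x : ℝ × ℝ => pd' h 0 x (1, 0) + pd' h 1 x (0, 1)) = F := by
      funext p
      rw [pd'_apply, pd'_apply, toE2_single0, toE2_single1, hFdef]
      exact (lap_eq h (toE2 p)).symm
    have hInt : IntegrableOn (fun x : ℝ × ℝ => pd' h 0 x (1, 0) + pd' h 1 x (0, 1))
        (Icc (-R, -R) (R, R)) volume := by
      rw [hid]; exact hFint.integrableOn
    have key := MeasureTheory.integral_divergence_prod_Icc_of_hasFDerivAt_off_countable_of_le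
      (pd h 0) (pd h 1) (pd' h 0) (pd' h 1) (-R, -R) (R, R) hle ∅ countable_empty
      (cont_pd hsmooth 0).continuousOn (cont_pd hsmooth 1).continuousOn
      (fun x _ => hasFDerivAt_pd hsmooth 0 x) (fun x _ => hasFDerivAt_pd hsmooth 1 x) hInt
    rw [hid] at key
    exact key
  -- Step 2: bound the flux by the boundary integral of the Laplacian.
  have hflux : ∀ R : ℝ, 0 < R →
      (((∫ x in (-R)..R, pd h 1 (x, R)) - ∫ x in (-R)..R, pd h 1 (x, -R)) +
          ∫ y in (-R)..R, pd h 0 (R, y)) - ∫ y in (-R)..R, pd h 0 (-R, y)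
        ≤ Real.sqrt 2 * R *
          ((∫ x in (-R)..R, F (x, R)) + (∫ x in (-R)..R, F (x, -R)) +
           (∫ y in (-R)..R, F (R, y)) + ∫ y in (-R)..R, F (-R, y)) := by
    intro R hR
    have hab : -R ≤ R := by linarith
    set s := Real.sqrt 2 * R with hs
    have hbd : ∀ (i : Fin 2) (p : ℝ × ℝ), p.1 ∈ Icc (-R) R → p.2 ∈ Icc (-R) R → p ≠ 0 →
        |pd h i p| ≤ s * F p := by
      intro i p h1 h2 hp
      refine pd_le hineq hnn i p hp ?_
      rw [toE2_norm]
      have e1 : p.1 ^ 2 ≤ R ^ 2 := sq_le_sq' h1.1 h1.2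
      have e2 : p.2 ^ 2 ≤ R ^ 2 := sq_le_sq' h2.1 h2.2
      calc Real.sqrt (p.1 ^ 2 + p.2 ^ 2) ≤ Real.sqrt (2 * R ^ 2) :=
            Real.sqrt_le_sqrt (by linarith)
        _ = s := by
            rw [hs, Real.sqrt_mul (by norm_num), Real.sqrt_sq hR.le]
    have side : ∀ (u v : ℝ → ℝ), Continuous u → Continuous v →
        (∀ x ∈ Icc (-R) R, |u x| ≤ v x) →
        |∫ x in (-R)..R, u x| ≤ ∫ x in (-R)..R, v x := by
      intro u v hu hv hb
      calc |∫ x in (-R)..R, u x| ≤ ∫ x in (-R)..R, |u x| :=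
            intervalIntegral.abs_integral_le_integral_abs hab
        _ ≤ ∫ x in (-R)..R, v x :=
            intervalIntegral.integral_mono_on hab (hu.abs.intervalIntegrable _ _)
              (hv.intervalIntegrable _ _) hb
    have hRmem : R ∈ Icc (-R) R := ⟨hab, le_rfl⟩
    have hRmem' : -R ∈ Icc (-R) R := ⟨le_rfl, hab⟩
    have hne1 : ∀ x : ℝ, ((x, R) : ℝ × ℝ) ≠ 0 := by
      intro x hc; exact hR.ne' (congrArg Prod.snd hc)
    have hne2 : ∀ x : ℝ, ((x, -R) : ℝ × ℝ) ≠ 0 := by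
      intro x hc
      have : -R = 0 := congrArg Prod.snd hc
      linarith
    have hne3 : ∀ y : ℝ, ((R, y) : ℝ × ℝ) ≠ 0 := by
      intro y hc; exact hR.ne' (congrArg Prod.fst hc)
    have hne4 : ∀ y : ℝ, ((-R, y) : ℝ × ℝ) ≠ 0 := by
      intro y hc
      have : -R = 0 := congrArg Prod.fst hc
      linarith
    have s1 : |∫ x in (-R)..R, pd h 1 (x, R)| ≤ s * ∫ x in (-R)..R, F (x, R) := by
      rw [← intervalIntegral.integral_const_mul]
      exact side _ _ ((cont_pd hsmooth 1).comp (continuous_id.prodMk continuous_const))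
        (continuous_const.mul (hFcont.comp (continuous_id.prodMk continuous_const)))
        (fun x hx => hbd 1 (x, R) hx hRmem (hne1 x))
    have s2 : |∫ x in (-R)..R, pd h 1 (x, -R)| ≤ s * ∫ x in (-R)..R, F (x, -R) := by
      rw [← intervalIntegral.integral_const_mul]
      exact side _ _ ((cont_pd hsmooth 1).comp (continuous_id.prodMk continuous_const))
        (continuous_const.mul (hFcont.comp (continuous_id.prodMk continuous_const)))
        (fun x hx => hbd 1 (x, -R) hx hRmem' (hne2 x))
    have s3 : |∫ y in (-R)..R, pd h 0 (R, y)| ≤ s * ∫ y in (-R)..R, F (R, y) := by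
      rw [← intervalIntegral.integral_const_mul]
      exact side _ _ ((cont_pd hsmooth 0).comp (continuous_const.prodMk continuous_id))
        (continuous_const.mul (hFcont.comp (continuous_const.prodMk continuous_id)))
        (fun y hy => hbd 0 (R, y) hRmem hy (hne3 y))
    have s4 : |∫ y in (-R)..R, pd h 0 (-R, y)| ≤ s * ∫ y in (-R)..R, F (-R, y) := by
      rw [← intervalIntegral.integral_const_mul]
      exact side _ _ ((cont_pd hsmooth 0).comp (continuous_const.prodMk continuous_id))
        (continuous_const.mul (hFcont.comp (continuous_const.prodMk continuous_id)))
        (fun y hy => hbd 0 (-R, y) hRmem' hy (hne4 y))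
    have a1 := abs_le.1 s1
    have a2 := abs_le.1 s2
    have a3 := abs_le.1 s3
    have a4 := abs_le.1 s4
    have := a1.2; have := a2.1; have := a3.2; have := a4.1
    nlinarith [a1.2, a2.1, a3.2, a4.1]
  -- Step 3: `F` vanishes identically.
  have hF0 : ∀ p, F p = 0 := by
    by_contra hne
    push_neg at hne
    obtain ⟨q, hq⟩ := hne
    have hqpos : 0 < F q := (hFnn q).lt_of_ne (Ne.symm hq)
    -- find a square on which the integral of F is positive
    obtain ⟨ε, hε, hball⟩ := Metric.isOpen_iff.1 (isOpen_lt continuous_const hFcont) q hqpos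
    set ε' := min ε 1 with hε'def
    have hε' : 0 < ε' := lt_min hε one_pos
    set R₀ : ℝ := |q.1| + |q.2| + 2 with hR₀def
    have hR₀pos : (0 : ℝ) < R₀ := by positivity
    have hballsub : Metric.ball q ε' ⊆ Icc ((-R₀, -R₀) : ℝ × ℝ) (R₀, R₀) := by
      intro p hp
      rw [Metric.mem_ball, Prod.dist_eq] at hp
      have h1 : dist p.1 q.1 < 1 := lt_of_le_of_lt (le_max_left _ _)
        (lt_of_lt_of_le hp (min_le_right _ _))
      have h2 : dist p.2 q.2 < 1 := lt_of_le_of_lt (le_max_right _ _)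
        (lt_of_lt_of_le hp (min_le_right _ _))
      rw [Real.dist_eq, abs_lt] at h1 h2
      have n1 := neg_abs_le q.1
      have n2 := neg_abs_le q.2
      have l1 := le_abs_self q.1
      have l2 := le_abs_self q.2
      have a1 := abs_nonneg q.1
      have a2 := abs_nonneg q.2
      refine ⟨⟨?_, ?_⟩, ?_, ?_⟩ <;> dsimp <;>
        linarith [h1.1, h1.2, h2.1, h2.2]
    have hMpos : 0 < ∫ p in Icc ((-R₀, -R₀) : ℝ × ℝ) (R₀, R₀), F p := by
      rw [setIntegral_pos_iff_support_of_nonneg_ae (ae_of_all _ hFnn) hFint.integrableOn]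
      refine lt_of_lt_of_le (Metric.measure_ball_pos volume q hε') (measure_mono ?_)
      intro p hp
      exact ⟨ne_of_gt (hball (Metric.ball_subset_ball (min_le_left _ _) hp)), hballsub hp⟩
    set c : ℝ := ∫ p in Icc ((-R₀, -R₀) : ℝ × ℝ) (R₀, R₀), F p with hcdef
    -- monotonicity of the integral over squares
    have hMmono : ∀ R : ℝ, R₀ ≤ R → c ≤ ∫ p in Icc ((-R, -R) : ℝ × ℝ) (R, R), F p := by
      intro R hRR
      refine setIntegral_mono_set hFint.integrableOn (ae_of_all _ hFnn)
        (HasSubset.Subset.eventuallyLE (Icc_subset_Icc ?_ ?_))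
      · exact ⟨by dsimp; linarith, by dsimp; linarith⟩
      · exact ⟨by dsimp; linarith, by dsimp; linarith⟩
    -- the boundary sum is bounded below for R ≥ R₀
    have hBlb : ∀ R : ℝ, R₀ ≤ R →
        c / Real.sqrt 2 * R⁻¹ ≤
          (∫ x in (-R)..R, F (x, R)) + (∫ x in (-R)..R, F (x, -R)) +
           (∫ y in (-R)..R, F (R, y)) + ∫ y in (-R)..R, F (-R, y) := by
      intro R hRR
      have hRpos : 0 < R := lt_of_lt_of_le hR₀pos hRR
      have h1 := hMmono R hRR
      have h2 := hdiv R hRpos.le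
      have h3 := hflux R hRpos
      have hsq2 : (0:ℝ) < Real.sqrt 2 := by positivity
      set X := (∫ x in (-R)..R, F (x, R)) + (∫ x in (-R)..R, F (x, -R)) +
           (∫ y in (-R)..R, F (R, y)) + ∫ y in (-R)..R, F (-R, y) with hXdef
      have h4 : c ≤ Real.sqrt 2 * R * X := by
        rw [h2] at h1
        exact h1.trans h3
      calc c / Real.sqrt 2 * R⁻¹ ≤ Real.sqrt 2 * R * X / Real.sqrt 2 * R⁻¹ := by
            gcongr
        _ = X := by
            field_simp
    -- Tonelli / divergence-of-1/R contradiction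
    set G : ℝ × ℝ → ENNReal := fun p => ENNReal.ofReal (F p) with hGdef
    have hGmeas : Measurable G := hFcont.measurable.ennreal_ofReal
    have htot : ∫⁻ p, G p ∂volume < ⊤ := hFint.lintegral_lt_top
    set g1 : ℝ → ENNReal := fun x => ∫⁻ y, G (x, y) with hg1def
    set g2 : ℝ → ENNReal := fun y => ∫⁻ x, G (x, y) with hg2def
    have hg1meas : Measurable g1 := hGmeas.lintegral_prod_right'
    have hg2meas : Measurable g2 := hGmeas.lintegral_prod_left'
    have hg1sum : ∫⁻ x, g1 x = ∫⁻ p, G p := by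
      rw [Measure.volume_eq_prod]
      exact (lintegral_prod _ hGmeas.aemeasurable).symm
    have hg2sum : ∫⁻ y, g2 y = ∫⁻ p, G p := by
      rw [Measure.volume_eq_prod]
      exact (lintegral_prod_symm _ hGmeas.aemeasurable).symm
    have hslice : ∀ R : ℝ, 0 < R →
        ENNReal.ofReal ((∫ x in (-R)..R, F (x, R)) + (∫ x in (-R)..R, F (x, -R)) +
           (∫ y in (-R)..R, F (R, y)) + ∫ y in (-R)..R, F (-R, y))
          ≤ g2 R + g2 (-R) + g1 R + g1 (-R) := by
      intro R hR
      have hab : -R ≤ R := by linarith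
      have key : ∀ u : ℝ → ℝ, Continuous u → (∀ x, 0 ≤ u x) →
          ENNReal.ofReal (∫ x in (-R)..R, u x) ≤ ∫⁻ x, ENNReal.ofReal (u x) := by
        intro u hu hupos
        rw [intervalIntegral.integral_of_le hab,
          ofReal_integral_eq_lintegral_ofReal (hu.integrableOn_Ioc) (ae_of_all _ hupos)]
        exact lintegral_mono' Measure.restrict_le_self le_rfl
      have k1 := key (fun x => F (x, R))
        (hFcont.comp (continuous_id.prodMk continuous_const)) (fun x => hFnn _)
      have k2 := key (fun x => F (x, -R))
        (hFcont.comp (continuous_id.prodMk continuous_const)) (fun x => hFnn _)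
      have k3 := key (fun y => F (R, y))
        (hFcont.comp (continuous_const.prodMk continuous_id)) (fun y => hFnn _)
      have k4 := key (fun y => F (-R, y))
        (hFcont.comp (continuous_const.prodMk continuous_id)) (fun y => hFnn _)
      have i1 : (0:ℝ) ≤ ∫ x in (-R)..R, F (x, R) :=
        intervalIntegral.integral_nonneg hab (fun x _ => hFnn _)
      have i2 : (0:ℝ) ≤ ∫ x in (-R)..R, F (x, -R) :=
        intervalIntegral.integral_nonneg hab (fun x _ => hFnn _)
      have i3 : (0:ℝ) ≤ ∫ y in (-R)..R, F (R, y) :=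
        intervalIntegral.integral_nonneg hab (fun y _ => hFnn _)
      have i4 : (0:ℝ) ≤ ∫ y in (-R)..R, F (-R, y) :=
        intervalIntegral.integral_nonneg hab (fun y _ => hFnn _)
      rw [ENNReal.ofReal_add (by linarith) i4, ENNReal.ofReal_add (by linarith) i3,
        ENNReal.ofReal_add i1 i2]
      exact add_le_add (add_le_add (add_le_add k1 k2) k3) k4
    have hupper : ∫⁻ R in Ioi R₀, ENNReal.ofReal (c / Real.sqrt 2 * R⁻¹) ∂volume < ⊤ := by
      have hle : ∫⁻ R in Ioi R₀, ENNReal.ofReal (c / Real.sqrt 2 * R⁻¹) ∂volume ≤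
          ∫⁻ R in Ioi R₀, (g2 R + g2 (-R) + g1 R + g1 (-R)) ∂volume := by
        refine lintegral_mono_ae ((ae_restrict_iff' measurableSet_Ioi).2 (ae_of_all _ ?_))
        intro R hR
        have hRR : R₀ ≤ R := le_of_lt hR
        have hRpos : 0 < R := lt_of_lt_of_le hR₀pos hRR
        exact le_trans (ENNReal.ofReal_le_ofReal (hBlb R hRR)) (hslice R hRpos)
      refine lt_of_le_of_lt hle (lt_of_le_of_lt
        (lintegral_mono' Measure.restrict_le_self le_rfl) ?_)
      have m2 : Measurable fun R : ℝ => g2 (-R) := hg2meas.comp measurable_neg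
      have m1 : Measurable fun R : ℝ => g1 (-R) := hg1meas.comp measurable_neg
      rw [lintegral_add_left (f := fun R => g2 R + g2 (-R) + g1 R) ((hg2meas.add m2).add hg1meas),
        lintegral_add_left (f := fun R => g2 R + g2 (-R)) (hg2meas.add m2), lintegral_add_left hg2meas]
      have e2 : ∫⁻ R : ℝ, g2 (-R) = ∫⁻ R, g2 R :=
        (Measure.measurePreserving_neg (volume : Measure ℝ)).lintegral_comp hg2meas
      have e1 : ∫⁻ R : ℝ, g1 (-R) = ∫⁻ R, g1 R :=
        (Measure.measurePreserving_neg (volume : Measure ℝ)).lintegral_comp hg1meas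
      rw [e2, e1, hg1sum, hg2sum]
      exact ENNReal.add_lt_top.2 ⟨ENNReal.add_lt_top.2
        ⟨ENNReal.add_lt_top.2 ⟨htot, htot⟩, htot⟩, htot⟩
    have hlower : ∫⁻ R in Ioi R₀, ENNReal.ofReal (c / Real.sqrt 2 * R⁻¹) ∂volume = ⊤ := by
      by_contra hfin
      have hmeas : Measurable fun R : ℝ => c / Real.sqrt 2 * R⁻¹ :=
        measurable_const.mul measurable_inv
      have hIntOn : IntegrableOn (fun R : ℝ => c / Real.sqrt 2 * R⁻¹) (Ioi R₀) volume := by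
        refine ⟨hmeas.aestronglyMeasurable, ?_⟩
        rw [hasFiniteIntegral_iff_ofReal ?pos]
        · exact lt_top_iff_ne_top.2 hfin
        case pos =>
          refine (ae_restrict_iff' measurableSet_Ioi).2 (ae_of_all _ fun R hR => ?_)
          have hRpos : (0:ℝ) < R := lt_of_lt_of_le hR₀pos (le_of_lt hR)
          have hs2 : (0:ℝ) < Real.sqrt 2 := Real.sqrt_pos.2 (by norm_num)
          exact (mul_pos (div_pos hMpos hs2) (inv_pos.2 hRpos)).le
      have hs2 : (0:ℝ) < Real.sqrt 2 := Real.sqrt_pos.2 (by norm_num)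
      have hc0 : c / Real.sqrt 2 ≠ 0 := ne_of_gt (div_pos hMpos hs2)
      have hone : IntegrableOn (fun R : ℝ => R⁻¹) (Ioi R₀) volume := by
        have h5 := hIntOn.const_mul (c / Real.sqrt 2)⁻¹
        have e : (fun R : ℝ => (c / Real.sqrt 2)⁻¹ * (c / Real.sqrt 2 * R⁻¹)) =
            fun R : ℝ => R⁻¹ := by
          funext R
          rw [← mul_assoc, inv_mul_cancel₀ hc0, one_mul]
        rw [e] at h5
        exact h5
      have hrpow : IntegrableOn (fun x : ℝ => x ^ (-1 : ℝ)) (Ioi R₀) volume := by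
        refine hone.congr_fun (fun x hx => ?_) measurableSet_Ioi
        have : ((-1 : ℤ) : ℝ) = (-1 : ℝ) := by norm_num
        rw [← this, Real.rpow_intCast, zpow_neg_one]
      have := (integrableOn_Ioi_rpow_iff hR₀pos).1 hrpow
      linarith
    rw [hlower] at hupper
    exact lt_irrefl ⊤ hupper
  -- Step 4: conclude that `h` is constant.
  have hlap0 : ∀ z, euclideanLaplacian h z = 0 := by
    intro z
    have := hF0 (toE2.symm z)
    rw [hFdef] at this
    simp only [ContinuousLinearEquiv.apply_symm_apply] at this
    exact this
  have hgrad0 : ∀ z : EuclideanSpace ℝ (Fin 2), z ≠ 0 → fderiv ℝ h z = 0 := by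
    intro z hz
    have h1 := hineq z hz
    rw [hlap0 z] at h1
    have h2 : 0 ≤ ‖gradient h z‖ / ‖z‖ := div_nonneg (norm_nonneg _) (norm_nonneg _)
    have h3 : ‖gradient h z‖ / ‖z‖ = 0 := le_antisymm h1 h2
    have hz' : ‖z‖ ≠ 0 := norm_ne_zero_iff.2 hz
    have h4 : ‖gradient h z‖ = 0 := by
      rcases div_eq_zero_iff.1 h3 with h | h
      · exact h
      · exact absurd h hz'
    have h5 : gradient h z = 0 := norm_eq_zero.1 h4
    ext v
    rw [ContinuousLinearMap.zero_apply, fderiv_eq_inner, h5, inner_zero_left]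
  have hfderiv0 : ∀ z, fderiv ℝ h z = 0 := by
    have := Continuous.ext_on (dense_compl_singleton (0 : EuclideanSpace ℝ (Fin 2)))
      (hsmooth.continuous_fderiv two_ne_zero) continuous_const hgrad0
    intro z
    exact congrFun this z
  intro x y
  exact is_const_of_fderiv_eq_zero (hsmooth.differentiable two_ne_zero) hfderiv0 x y
end

section
/- Let h : ℝ² → ℝ be a twice continuously differentiable function and let t > 0. Then the integral of Δh over the closed Euclidean ball of radius t centered at the origin (with respect to Lebesgue measure) is at most the integral of ‖∇h‖ over the Euclidean circle of radius t centered at the origin (with respect to the one-dimensional Hausdorff measure on the circle). -/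
open MeasureTheory

open Real Set

noncomputable section
namespace Lap
abbrev E2 := EuclideanSpace ℝ (Fin 2)
def e0 : E2 := EuclideanSpace.single 0 1
def e1 : E2 := EuclideanSpace.single 1 1
def om (θ : ℝ) : E2 := Real.cos θ • e0 + Real.sin θ • e1
def omp (θ : ℝ) : E2 := (-Real.sin θ) • e0 + Real.cos θ • e1

lemma coord0 (u v : ℝ) : (u • e0 + v • e1) 0 = u := by
  simp [e0, e1, EuclideanSpace.single_apply]
lemma coord1 (u v : ℝ) : (u • e0 + v • e1) 1 = v := by
  simp [e0, e1, EuclideanSpace.single_apply]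

lemma norm_combo (u v : ℝ) : ‖u • e0 + v • e1‖ = Real.sqrt (u^2 + v^2) := by
  rw [EuclideanSpace.norm_eq]
  rw [Fin.sum_univ_two]
  rw [coord0, coord1]
  simp [sq_abs]

lemma norm_om (θ : ℝ) : ‖om θ‖ = 1 := by
  rw [om, norm_combo]
  rw [show Real.cos θ ^2 + Real.sin θ ^2 = 1 by rw [add_comm]; exact Real.sin_sq_add_cos_sq θ]
  simp
end Lap
namespace Lap
variable {t : ℝ}

def q (t θ : ℝ) : E2 := t • om θ

lemma q_eq (t θ : ℝ) : q t θ = (t * Real.cos θ) • e0 + (t * Real.sin θ) • e1 := by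
  simp [q, om, smul_add, smul_smul]

lemma norm_q (ht : 0 < t) (θ : ℝ) : ‖q t θ‖ = t := by
  rw [q, norm_smul, norm_om, Real.norm_eq_abs, abs_of_pos ht, mul_one]

lemma q_mem_sphere (ht : 0 < t) (θ : ℝ) : q t θ ∈ Metric.sphere (0 : E2) t := by
  simp [mem_sphere_iff_norm, norm_q ht]

lemma dist_q (t x y : ℝ) : dist (q t x) (q t y) = 2 * |t| * |Real.sin ((x - y)/2)| := by
  rw [dist_eq_norm]
  have : q t x - q t y = (t * Real.cos x - t * Real.cos y) • e0 + (t * Real.sin x - t * Real.sin y) • e1 := by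
    rw [q_eq, q_eq]
    module
  rw [this, norm_combo]
  have h1 : (t * Real.cos x - t * Real.cos y)^2 + (t * Real.sin x - t * Real.sin y)^2
      = t^2 * (4 * Real.sin ((x-y)/2)^2) := by
    have hc : Real.cos x * Real.cos y + Real.sin x * Real.sin y = Real.cos (x - y) :=
      (Real.cos_sub x y).symm
    have hs : Real.sin ((x-y)/2)^2 = 1/2 - Real.cos (x-y)/2 := by
      have := Real.sin_sq_eq_half_sub ((x-y)/2)
      rwa [show 2 * ((x-y)/2) = x - y by ring] at this
    nlinarith [Real.sin_sq_add_cos_sq x, Real.sin_sq_add_cos_sq y]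
  rw [h1]
  rw [show t^2 * (4 * Real.sin ((x-y)/2)^2) = (2 * |t| * |Real.sin ((x-y)/2)|)^2 by
    rw [mul_pow, mul_pow, sq_abs, sq_abs]; ring]
  exact Real.sqrt_sq (by positivity)

lemma sin_half_ge {u δ : ℝ} (hu0 : 0 ≤ u) (hud : u ≤ δ) (hδ : δ ≤ 2) :
    (1 - δ^2/16) * u ≤ 2 * Real.sin (u/2) := by
  rcases eq_or_lt_of_le hu0 with rfl | hu
  · simp
  · have h1 : 0 < u/2 := by linarith
    have h2 : u/2 ≤ 1 := by linarith
    have := Real.sin_gt_sub_cube h1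
    nlinarith [sq_nonneg (u - δ), sq_nonneg u, sq_nonneg δ]

lemma dist_q_ge {δ : ℝ} (ht : 0 < t) (hδ : δ ≤ 2) {x y : ℝ} (hxy : |x - y| ≤ δ) :
    t * (1 - δ^2/16) * dist x y ≤ dist (q t x) (q t y) := by
  rw [dist_q, Real.dist_eq, abs_of_pos ht]
  wlog hle : y ≤ x generalizing x y
  · rw [abs_sub_comm]
    rw [show (x - y)/2 = -((y-x)/2) by ring, Real.sin_neg, abs_neg]
    exact this (by rwa [abs_sub_comm]) (le_of_not_ge hle)
  have h0 : 0 ≤ x - y := by linarith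
  rw [abs_of_nonneg h0] at hxy ⊢
  have key := sin_half_ge h0 hxy hδ
  have hsn : 0 ≤ Real.sin ((x - y)/2) := by
    apply Real.sin_nonneg_of_nonneg_of_le_pi (by linarith)
    linarith [Real.pi_gt_three]
  rw [abs_of_nonneg hsn]
  calc t * (1 - δ^2/16) * (x - y) = t * ((1 - δ^2/16) * (x-y)) := by ring
  _ ≤ t * (2 * Real.sin ((x-y)/2)) := by
      exact mul_le_mul_of_nonneg_left key ht.le
  _ = 2 * t * Real.sin ((x-y)/2) := by ring
namespace Interval

open scoped NNReal ENNReal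

lemma arc_lower {t δ : ℝ} (ht : 0 < t) (hδ0 : 0 < δ) (hδ : δ ≤ 2)
    {a w : ℝ} (hw : w ≤ δ) (s : Set ℝ) (hs : s ⊆ Ioc a (a + w)) :
    ENNReal.ofReal (t * (1 - δ^2/16)) * volume s ≤ μH[(1:ℝ)] (q t '' s) := by
  have hc' : 0 < 1 - δ^2/16 := by nlinarith
  have htc : 0 < t * (1 - δ^2/16) := by positivity
  set T : Set ℝ := Ioc a (a + w) with hT
  set Q : T → E2 := fun x => q t x with hQ
  set K : ℝ≥0 := (t * (1 - δ^2/16)).toNNReal with hK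
  have hKpos : 0 < K := Real.toNNReal_pos.2 htc
  have hanti : AntilipschitzWith K⁻¹ Q := by
    rw [antilipschitzWith_iff_le_mul_dist]
    rintro ⟨x, hx⟩ ⟨y, hy⟩
    have hxy : |x - y| ≤ δ := by
      rw [abs_sub_le_iff]
      constructor <;> [skip; skip] <;>
      · have := hx.1; have := hx.2; have := hy.1; have := hy.2; linarith
    have := dist_q_ge ht hδ hxy
    have hd : dist (⟨x, hx⟩ : T) ⟨y, hy⟩ = dist x y := rfl
    rw [hd]
    have hQd : dist (Q ⟨x, hx⟩) (Q ⟨y, hy⟩) = dist (q t x) (q t y) := rfl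
    rw [hQd, NNReal.coe_inv, hK, Real.coe_toNNReal _ htc.le]
    rw [inv_mul_eq_div, le_div_iff₀ htc]
    linarith [this]
  have himg : q t '' s = Q '' (Subtype.val ⁻¹' s) := by
    have : Q '' (Subtype.val ⁻¹' s) = q t '' (Subtype.val '' (Subtype.val ⁻¹' s : Set T)) := by
      rw [← Set.image_comp]; rfl
    rw [this, Subtype.image_preimage_coe, Set.inter_eq_self_of_subset_right hs]
  have hiso : μH[(1:ℝ)] (Subtype.val ⁻¹' s : Set T) = volume s := by
    have h1 : Subtype.val '' (Subtype.val ⁻¹' s : Set T) = s := by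
      rw [Subtype.image_preimage_coe, Set.inter_eq_self_of_subset_right hs]
    have := Isometry.hausdorffMeasure_image (isometry_subtype_coe (s := T)) (Or.inl zero_le_one)
      (Subtype.val ⁻¹' s)
    rw [h1] at this
    rw [← this, MeasureTheory.hausdorffMeasure_real]
  calc ENNReal.ofReal (t * (1 - δ^2/16)) * volume s
      = (K : ℝ≥0∞) * μH[(1:ℝ)] (Subtype.val ⁻¹' s : Set T) := by rw [hiso]; rfl
  _ ≤ (K : ℝ≥0∞) * ((K⁻¹ : ℝ≥0) ^ (1:ℝ) * μH[(1:ℝ)] (Q '' (Subtype.val ⁻¹' s))) := by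
      gcongr
      exact hanti.le_hausdorffMeasure_image zero_le_one _
  _ = μH[(1:ℝ)] (q t '' s) := by
      rw [himg, ENNReal.rpow_one, ← mul_assoc, ENNReal.coe_inv hKpos.ne',
        ENNReal.mul_inv_cancel (by exact_mod_cast hKpos.ne') ENNReal.coe_ne_top, one_mul]

end Interval
namespace Lap
open scoped NNReal ENNReal

lemma Ioc_cover (a w : ℝ) (hw : 0 ≤ w) :
    ∀ n : ℕ, Ioc a (a + n*w) ⊆ ⋃ j ∈ Finset.range n, Ioc (a + j*w) (a + j*w + w) := by
  intro n
  induction n with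
  | zero => simp
  | succ n ih =>
    have hsplit : Ioc a (a + (n+1 : ℕ)*w) ⊆ Ioc a (a + n*w) ∪ Ioc (a + n*w) (a + n*w + w) := by
      intro x hx
      rcases le_or_gt x (a + n*w) with hc | hc
      · exact Or.inl ⟨hx.1, hc⟩
      · refine Or.inr ⟨hc, ?_⟩
        have := hx.2
        push_cast at this ⊢
        linarith
    intro x hx
    rcases hsplit hx with hx' | hx'
    · rcases mem_iUnion₂.1 (ih hx') with ⟨j, hj, hxj⟩
      exact mem_iUnion₂.2 ⟨j, Finset.mem_range.2 (Nat.lt_succ_of_lt (Finset.mem_range.1 hj)), hxj⟩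
    · exact mem_iUnion₂.2 ⟨n, Finset.mem_range.2 (Nat.lt_succ_self n), hx'⟩

def ang (x : E2) : ℝ := Complex.arg ((x 0 : ℂ) + x 1 * Complex.I)

lemma measurable_ang : Measurable ang := by
  apply Complex.measurable_arg.comp
  fun_prop

lemma ang_q {t : ℝ} (ht : 0 < t) {θ : ℝ} (hθ : θ ∈ Ioc (-π) π) : ang (q t θ) = θ := by
  have h0 : (q t θ) 0 = t * Real.cos θ := by rw [q_eq]; exact coord0 _ _
  have h1 : (q t θ) 1 = t * Real.sin θ := by rw [q_eq]; exact coord1 _ _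
  rw [ang, h0, h1]
  have : ((t * Real.cos θ : ℝ) : ℂ) + (t * Real.sin θ : ℝ) * Complex.I
      = (t : ℝ) * (Real.cos θ + Real.sin θ * Complex.I) := by push_cast; ring
  rw [this, Complex.arg_real_mul _ ht]
  rw [Complex.ofReal_cos, Complex.ofReal_sin, Complex.arg_cos_add_sin_mul_I hθ]

lemma continuous_q (t : ℝ) : Continuous (q t) := by
  unfold q om
  fun_prop

lemma nu_le {t δ : ℝ} (ht : 0 < t) (hδ0 : 0 < δ) (hδ : δ ≤ 2) {A : Set E2}
    (hA : MeasurableSet A) :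
    ENNReal.ofReal (t * (1 - δ^2/16)) * volume (q t ⁻¹' A ∩ Ioc (-π) π)
      ≤ μH[(1:ℝ)] (A ∩ Metric.sphere (0 : E2) t) := by
  set n : ℕ := ⌈2*π/δ⌉₊ with hn
  have hπ : 0 < π := Real.pi_pos
  have hnpos : 0 < (n:ℝ) := by
    have : 0 < 2*π/δ := by positivity
    exact_mod_cast Nat.ceil_pos.2 this
  set w : ℝ := 2*π/n with hw
  have hwpos : 0 < w := by positivity
  have hwδ : w ≤ δ := by
    rw [hw, div_le_iff₀ hnpos]
    have h1 : 2*π/δ ≤ (n:ℝ) := Nat.le_ceil _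
    calc 2*π = (2*π/δ) * δ := by field_simp
    _ ≤ (n:ℝ) * δ := by gcongr
    _ = δ * n := by ring
  have hnw : (n:ℝ) * w = 2*π := by
    rw [hw]; field_simp
  set A' := A ∩ Metric.sphere (0 : E2) t with hA'
  set B : ℕ → Set E2 := fun j => ang ⁻¹' Ioc (-π + j*w) (-π + j*w + w) with hB
  set s : ℕ → Set ℝ := fun j => q t ⁻¹' A' ∩ Ioc (-π + j*w) (-π + j*w + w) with hs
  have hcover : q t ⁻¹' A ∩ Ioc (-π) π ⊆ ⋃ j ∈ Finset.range n, s j := by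
    intro θ hθ
    have hθ' : θ ∈ Ioc (-π) (-π + n*w) := by rw [hnw]; convert hθ.2 using 2; ring
    rcases mem_iUnion₂.1 (Ioc_cover (-π) w hwpos.le n hθ') with ⟨j, hj, hθj⟩
    refine mem_iUnion₂.2 ⟨j, hj, ⟨⟨hθ.1, q_mem_sphere ht θ⟩, hθj⟩⟩
  have himg : ∀ j < n, q t '' s j ⊆ A' ∩ B j := by
    intro j hj x hx
    rcases hx with ⟨θ, hθ, rfl⟩
    have hθIoc : θ ∈ Ioc (-π) π := by
      constructor
      · have := hθ.2.1
        nlinarith [mul_nonneg (Nat.cast_nonneg (α := ℝ) j) hwpos.le]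
      · have hj' : (j:ℝ) + 1 ≤ n := by exact_mod_cast hj
        have := hθ.2.2
        nlinarith
    refine ⟨hθ.1, ?_⟩
    rw [hB, Set.mem_preimage, ang_q ht hθIoc]
    exact hθ.2
  have hBdisj : (↑(Finset.range n) : Set ℕ).PairwiseDisjoint B := by
    intro i hi j hj hij
    apply Disjoint.preimage
    rw [Set.Ioc_disjoint_Ioc]
    rcases lt_or_gt_of_ne hij with hlt | hlt
    · have : (i:ℝ) + 1 ≤ j := by exact_mod_cast hlt
      apply min_le_of_left_le
      apply le_max_of_le_right
      nlinarith
    · have : (j:ℝ) + 1 ≤ i := by exact_mod_cast hlt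
      apply min_le_of_right_le
      apply le_max_of_le_left
      nlinarith
  have hA'meas : MeasurableSet A' := hA.inter Metric.isClosed_sphere.measurableSet
  have hBmeas : ∀ j, MeasurableSet (A' ∩ B j) :=
    fun j => hA'meas.inter (measurable_ang measurableSet_Ioc)
  calc ENNReal.ofReal (t * (1 - δ^2/16)) * volume (q t ⁻¹' A ∩ Ioc (-π) π)
      ≤ ENNReal.ofReal (t * (1 - δ^2/16)) * ∑ j ∈ Finset.range n, volume (s j) := by
        gcongr
        exact (measure_mono hcover).trans (measure_biUnion_finset_le _ _)
  _ = ∑ j ∈ Finset.range n, ENNReal.ofReal (t * (1 - δ^2/16)) * volume (s j) := by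
        rw [Finset.mul_sum]
  _ ≤ ∑ j ∈ Finset.range n, μH[(1:ℝ)] (A' ∩ B j) := by
        apply Finset.sum_le_sum
        intro j hj
        calc ENNReal.ofReal (t * (1 - δ^2/16)) * volume (s j)
            ≤ μH[(1:ℝ)] (q t '' s j) :=
              Interval.arc_lower ht hδ0 hδ hwδ (s j) Set.inter_subset_right
        _ ≤ μH[(1:ℝ)] (A' ∩ B j) := measure_mono (himg j (Finset.mem_range.1 hj))
  _ = μH[(1:ℝ)] (⋃ j ∈ Finset.range n, (A' ∩ B j)) := by
        refine (measure_biUnion_finset ?_ (fun j _ => hBmeas j)).symm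
        intro i hi j hj hij
        exact Set.disjoint_of_subset Set.inter_subset_right Set.inter_subset_right
          (hBdisj hi hj hij)
  _ ≤ μH[(1:ℝ)] A' := by
        apply measure_mono
        exact Set.iUnion₂_subset fun j _ => Set.inter_subset_left
namespace Lap2
open Lap
open scoped NNReal ENNReal

lemma sphere_subset_image {t : ℝ} (ht : 0 < t) :
    Metric.sphere (0 : E2) t ⊆ q t '' (Ioc (-π) π) := by
  intro x hx
  have hx' : ‖x‖ = t := by simpa [mem_sphere_iff_norm] using hx
  set z : ℂ := (x 0 : ℂ) + x 1 * Complex.I with hz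
  have habs : ‖z‖ = t := by
    have : ‖x‖ = Real.sqrt ((x 0)^2 + (x 1)^2) := by
      rw [EuclideanSpace.norm_eq, Fin.sum_univ_two]
      simp [Real.norm_eq_abs, sq_abs]
    rw [Complex.norm_def, hz, Complex.normSq_add_mul_I, ← this, hx']
  have hz0 : z ≠ 0 := by
    intro h
    rw [h, norm_zero] at habs
    exact ht.ne' habs.symm
  refine ⟨Complex.arg z, Complex.arg_mem_Ioc z, ?_⟩
  have hc : Real.cos (Complex.arg z) = x 0 / t := by
    rw [Complex.cos_arg hz0, habs, hz]; simp
  have hs : Real.sin (Complex.arg z) = x 1 / t := by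
    rw [Complex.sin_arg, habs, hz]; simp
  ext i
  fin_cases i
  · show q t (Complex.arg z) 0 = x 0
    rw [q_eq, coord0, hc]
    field_simp
  · show q t (Complex.arg z) 1 = x 1
    rw [q_eq, coord1, hs]
    field_simp

lemma sphere_hausdorff_finite {t : ℝ} (ht : 0 < t) :
    μH[(1:ℝ)] (Metric.sphere (0 : E2) t) < ⊤ := by
  have hlip : LipschitzOnWith t.toNNReal (q t) (Icc (-π) π) := by
    rw [lipschitzOnWith_iff_dist_le_mul]
    intro x _ y _
    rw [dist_q, Real.dist_eq, abs_of_pos ht, Real.coe_toNNReal _ ht.le]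
    have := Real.abs_sin_le_abs (x := (x - y)/2)
    have h2 : |(x-y)/2| = |x - y|/2 := by rw [abs_div]; simp
    nlinarith [abs_nonneg (x - y)]
  calc μH[(1:ℝ)] (Metric.sphere (0 : E2) t) ≤ μH[(1:ℝ)] (q t '' (Icc (-π) π)) := by
        apply measure_mono
        exact (sphere_subset_image ht).trans (Set.image_mono Ioc_subset_Icc_self)
  _ ≤ (t.toNNReal : ℝ≥0∞) ^ (1:ℝ) * μH[(1:ℝ)] (Icc (-π) π) :=
        hlip.hausdorffMeasure_image_le zero_le_one
  _ < ⊤ := by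
        rw [MeasureTheory.hausdorffMeasure_real, ENNReal.rpow_one, Real.volume_Icc]
        exact ENNReal.mul_lt_top ENNReal.coe_lt_top ENNReal.ofReal_lt_top

lemma sphere_integral_ge {t δ : ℝ} (ht : 0 < t) (hδ0 : 0 < δ) (hδ : δ ≤ 2)
    (f : E2 → ℝ) (hf : Continuous f) (hf0 : ∀ x, 0 ≤ f x) :
    (t * (1 - δ^2/16)) * ∫ θ in Ioc (-π) π, f (q t θ)
      ≤ ∫ x in Metric.sphere (0 : E2) t, f x ∂μH[(1:ℝ)] := by
  have hc' : 0 < 1 - δ^2/16 := by nlinarith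
  have htc : 0 < t * (1 - δ^2/16) := by positivity
  set μS := μH[(1:ℝ)].restrict (Metric.sphere (0 : E2) t) with hμS
  set ν : Measure E2 :=
    ENNReal.ofReal (t * (1 - δ^2/16)) •
      Measure.map (q t) (volume.restrict (Ioc (-π) π)) with hν
  have hle : ν ≤ μS := by
    rw [Measure.le_iff]
    intro A hAm
    rw [hν, Measure.smul_apply, smul_eq_mul,
      Measure.map_apply (continuous_q t).measurable hAm,
      Measure.restrict_apply ((continuous_q t).measurable hAm),
      hμS, Measure.restrict_apply hAm]
    exact nu_le ht hδ0 hδ hAm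
  have hfinS : IsFiniteMeasure μS := by
    constructor
    rw [hμS, Measure.restrict_apply_univ]
    exact sphere_hausdorff_finite ht
  have hint : Integrable f μS := by
    obtain ⟨C, hC⟩ := (isCompact_sphere (0:E2) t).exists_bound_of_continuousOn hf.continuousOn
    refine ⟨hf.aestronglyMeasurable, ?_⟩
    apply MeasureTheory.HasFiniteIntegral.of_bounded (C := C)
    rw [hμS]
    exact (ae_restrict_iff' Metric.isClosed_sphere.measurableSet).2 (ae_of_all _ hC)
  have hmono := integral_mono_measure hle (ae_of_all _ hf0) hint
  have hνint : ∫ x, f x ∂ν = (t * (1 - δ^2/16)) * ∫ θ in Ioc (-π) π, f (q t θ) := by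
    rw [hν, integral_smul_measure,
      integral_map (continuous_q t).measurable.aemeasurable hf.aestronglyMeasurable,
      ENNReal.toReal_ofReal htc.le, smul_eq_mul]
  rw [hνint] at hmono
  exact hmono

end Lap2
namespace Lap2
open Lap Filter

lemma sphere_integral_ge' {t : ℝ} (ht : 0 < t)
    (f : E2 → ℝ) (hf : Continuous f) (hf0 : ∀ x, 0 ≤ f x) :
    t * ∫ θ in Ioc (-π) π, f (q t θ)
      ≤ ∫ x in Metric.sphere (0 : E2) t, f x ∂μH[(1:ℝ)] := by
  set X := ∫ θ in Ioc (-π) π, f (q t θ) with hX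
  set Y := ∫ x in Metric.sphere (0 : E2) t, f x ∂μH[(1:ℝ)] with hY
  have key : ∀ k : ℕ, t * (1 - (1/((k:ℝ)+1))^2/16) * X ≤ Y := by
    intro k
    have hk : (0:ℝ) < 1/((k:ℝ)+1) := by positivity
    have hk2 : (1:ℝ)/((k:ℝ)+1) ≤ 2 := by
      rw [div_le_iff₀ (by positivity)]
      nlinarith [Nat.cast_nonneg (α := ℝ) k]
    have := sphere_integral_ge ht hk hk2 f hf hf0
    rw [← hX, ← hY] at this
    linarith
  have htend : Tendsto (fun k : ℕ => t * (1 - (1/((k:ℝ)+1))^2/16) * X) atTop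
      (nhds (t * X)) := by
    have h1 : Tendsto (fun k : ℕ => 1/((k:ℝ)+1)) atTop (nhds 0) :=
      tendsto_one_div_add_atTop_nhds_zero_nat
    have h2 : Continuous (fun c : ℝ => t * (1 - c^2/16) * X) := by continuity
    have h3 := (h2.tendsto 0).comp h1
    simp only [Function.comp_def] at h3
    convert h3 using 2 with k
    norm_num
  exact le_of_tendsto htend (Filter.Eventually.of_forall key)

end Lap2
namespace Lap3
open Lap

variable {h : E2 → ℝ} (hs : ContDiff ℝ 2 h)

def P (p : ℝ × ℝ) : E2 := p.1 • om p.2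

def ff (h : E2 → ℝ) (p : ℝ × ℝ) : ℝ := p.1 * fderiv ℝ h (P p) (om p.2)
def gg (h : E2 → ℝ) (p : ℝ × ℝ) : ℝ := fderiv ℝ h (P p) (omp p.2)

lemma contDiff_om : ContDiff ℝ 1 om :=
  (Real.contDiff_cos.of_le le_top |>.smul contDiff_const).add
    (Real.contDiff_sin.of_le le_top |>.smul contDiff_const)

lemma contDiff_omp : ContDiff ℝ 1 omp :=
  ((Real.contDiff_sin.of_le le_top).neg.smul contDiff_const).add
    ((Real.contDiff_cos.of_le le_top).smul contDiff_const)

lemma contDiff_P : ContDiff ℝ 1 P :=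
  (contDiff_fst).smul (contDiff_om.comp contDiff_snd)

include hs

lemma hDh1 : ContDiff ℝ 1 (fderiv ℝ h) :=
  hs.fderiv_right (by norm_num)

lemma contDiff_ff : ContDiff ℝ 1 (ff h) :=
  contDiff_fst.mul (((hDh1 hs).comp contDiff_P).clm_apply (contDiff_om.comp contDiff_snd))

lemma contDiff_gg : ContDiff ℝ 1 (gg h) :=
  ((hDh1 hs).comp contDiff_P).clm_apply (contDiff_omp.comp contDiff_snd)

omit hs in
lemma hasDerivAt_om (θ : ℝ) : HasDerivAt om (omp θ) θ := by
  have := ((Real.hasDerivAt_cos θ).smul_const e0).add ((Real.hasDerivAt_sin θ).smul_const e1)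
  exact this

omit hs in
lemma hasDerivAt_omp (θ : ℝ) : HasDerivAt omp (-om θ) θ := by
  have := (((Real.hasDerivAt_sin θ).neg).smul_const e0).add
    (((Real.hasDerivAt_cos θ)).smul_const e1)
  refine this.congr_deriv ?_
  unfold om
  module

lemma deriv_ff_r (r θ : ℝ) :
    HasDerivAt (fun r' => ff h (r', θ))
      (fderiv ℝ h (P (r, θ)) (om θ) +
        r * fderiv ℝ (fderiv ℝ h) (P (r, θ)) (om θ) (om θ)) r := by
  have hc1 : HasDerivAt (fun r' : ℝ => r' • om θ) (om θ) r := by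
    simpa using (hasDerivAt_id r).smul_const (om θ)
  have hDhx : HasFDerivAt (fderiv ℝ h) (fderiv ℝ (fderiv ℝ h) (P (r, θ))) (P (r, θ)) :=
    (((hDh1 hs).differentiable one_ne_zero) (P (r, θ))).hasFDerivAt
  have hΦ : HasDerivAt (fun r' : ℝ => fderiv ℝ h (r' • om θ))
      (fderiv ℝ (fderiv ℝ h) (P (r, θ)) (om θ)) r :=
    hDhx.comp_hasDerivAt r hc1
  have happ := hΦ.clm_apply (hasDerivAt_const r (om θ))
  have hmul := (hasDerivAt_id r).mul happ
  refine hmul.congr_deriv ?_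
  symm
  simp [ff, P]

lemma deriv_gg_th (r θ : ℝ) :
    HasDerivAt (fun θ' => gg h (r, θ'))
      (fderiv ℝ (fderiv ℝ h) (P (r, θ)) (r • omp θ) (omp θ)
        - fderiv ℝ h (P (r, θ)) (om θ)) θ := by
  have hc2 : HasDerivAt (fun θ' : ℝ => r • om θ') (r • omp θ) θ :=
    (hasDerivAt_om θ).const_smul r
  have hDhx : HasFDerivAt (fderiv ℝ h) (fderiv ℝ (fderiv ℝ h) (P (r, θ))) (P (r, θ)) :=
    (((hDh1 hs).differentiable one_ne_zero) (P (r, θ))).hasFDerivAt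
  have hΨ : HasDerivAt (fun θ' : ℝ => fderiv ℝ h (r • om θ'))
      (fderiv ℝ (fderiv ℝ h) (P (r, θ)) (r • omp θ)) θ :=
    hDhx.comp_hasDerivAt θ hc2
  have happ := hΨ.clm_apply (hasDerivAt_omp θ)
  refine happ.congr_deriv ?_
  symm
  show _ = _ + (fderiv ℝ h (r • om θ)) (-om θ)
  simp [P]
  ring

omit hs in
lemma lap_eq (x : E2) : euclideanLaplacian h x
    = fderiv ℝ (fderiv ℝ h) x e0 e0 + fderiv ℝ (fderiv ℝ h) x e1 e1 := by
  simp [euclideanLaplacian, Fin.sum_univ_two, iteratedFDeriv_two_apply, e0, e1]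

lemma div_eq (p : ℝ × ℝ) :
    fderiv ℝ (ff h) p (1, 0) + fderiv ℝ (gg h) p (0, 1)
      = p.1 * euclideanLaplacian h (P p) := by
  obtain ⟨r, θ⟩ := p
  have hcurve1 : HasDerivAt (fun r' : ℝ => ((r' : ℝ), θ)) ((1:ℝ), (0:ℝ)) r :=
    (hasDerivAt_id r).prodMk (hasDerivAt_const r θ)
  have h1 : HasDerivAt (fun r' => ff h (r', θ)) (fderiv ℝ (ff h) (r, θ) (1, 0)) r :=
    by have := (((contDiff_ff hs).differentiable one_ne_zero (r, θ)).hasFDerivAt).comp_hasDerivAt r hcurve1; exact this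
  have hcurve2 : HasDerivAt (fun θ' : ℝ => ((r : ℝ), θ')) ((0:ℝ), (1:ℝ)) θ :=
    (hasDerivAt_const θ r).prodMk (hasDerivAt_id θ)
  have h2 : HasDerivAt (fun θ' => gg h (r, θ')) (fderiv ℝ (gg h) (r, θ) (0, 1)) θ :=
    by have := (((contDiff_gg hs).differentiable one_ne_zero (r, θ)).hasFDerivAt).comp_hasDerivAt θ hcurve2; exact this
  rw [h1.unique (deriv_ff_r hs r θ), h2.unique (deriv_gg_th hs r θ), lap_eq]
  set D := fderiv ℝ (fderiv ℝ h) (P (r, θ)) with hD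
  simp only [om, omp, map_add, _root_.map_smul, map_neg, ContinuousLinearMap.add_apply,
    ContinuousLinearMap.coe_smul', ContinuousLinearMap.neg_apply, Pi.smul_apply,
    Pi.neg_apply, smul_eq_mul, neg_smul, smul_neg]
  have hpyth := Real.sin_sq_add_cos_sq θ
  linear_combination (r * ((D e0) e0 + (D e1) e1)) * hpyth

end Lap3
namespace Lap4
open Lap Lap3 intervalIntegral

variable {h : E2 → ℝ} (hs : ContDiff ℝ 2 h) {t : ℝ}

include hs

lemma lap_continuous : Continuous (euclideanLaplacian h) := by
  have hD2 : Continuous (fderiv ℝ (fderiv ℝ h)) := (hDh1 hs).continuous_fderiv one_ne_zero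
  have h0 : Continuous fun x => fderiv ℝ (fderiv ℝ h) x e0 e0 :=
    (hD2.clm_apply continuous_const).clm_apply continuous_const
  have h1 : Continuous fun x => fderiv ℝ (fderiv ℝ h) x e1 e1 :=
    (hD2.clm_apply continuous_const).clm_apply continuous_const
  have : (euclideanLaplacian h)
      = fun x => fderiv ℝ (fderiv ℝ h) x e0 e0 + fderiv ℝ (fderiv ℝ h) x e1 e1 :=
    funext (lap_eq (h := h))
  rw [this]
  exact h0.add h1

lemma divergence_eq (ht : 0 < t) :
    ∫ p in Icc ((0:ℝ), -π) (t, π), p.1 * euclideanLaplacian h (P p)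
      = ∫ y in (-π)..π, ff h (t, y) := by
  have hle : ((0:ℝ), -π) ≤ (t, π) := by
    constructor
    · exact ht.le
    · simp only
      linarith [Real.pi_pos]
  have hPc : Continuous P := contDiff_P.continuous
  have hdiv := integral_divergence_prod_Icc_of_hasFDerivAt_off_countable_of_le
    (ff h) (gg h) (fderiv ℝ (ff h)) (fderiv ℝ (gg h)) ((0:ℝ), -π) (t, π) hle ∅
    Set.countable_empty ((contDiff_ff hs).continuous.continuousOn)
    ((contDiff_gg hs).continuous.continuousOn)
    (fun x _ => ((contDiff_ff hs).differentiable one_ne_zero x).hasFDerivAt)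
    (fun x _ => ((contDiff_gg hs).differentiable one_ne_zero x).hasFDerivAt)
    ?_
  · rw [show (∫ p in Icc ((0:ℝ), -π) (t, π), p.1 * euclideanLaplacian h (P p))
        = ∫ p in Icc ((0:ℝ), -π) (t, π),
            (fderiv ℝ (ff h) p (1, 0) + fderiv ℝ (gg h) p (0, 1)) from
      setIntegral_congr_fun measurableSet_Icc (fun p _ => (div_eq hs p).symm)]
    rw [hdiv]
    have hgg : ∀ x : ℝ, gg h (x, π) = gg h (x, -π) := by
      intro x
      have hom : om π = om (-π) := by unfold om; simp
      have homp : omp π = omp (-π) := by unfold omp; simp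
      simp only [gg, P]
      rw [hom, homp]
    have h1 : (∫ x in (0:ℝ)..t, gg h (x, π)) = ∫ x in (0:ℝ)..t, gg h (x, -π) := by
      simp only [hgg]
    have h2 : (∫ y in (-π)..π, ff h (0, y)) = 0 := by
      simp [ff]
    rw [h1, h2]
    ring
  · have hc1 : Continuous fun x : ℝ × ℝ => fderiv ℝ (ff h) x (1, 0) :=
      (((contDiff_ff hs).continuous_fderiv one_ne_zero).clm_apply continuous_const)
    have hc2 : Continuous fun x : ℝ × ℝ => fderiv ℝ (gg h) x (0, 1) :=
      (((contDiff_gg hs).continuous_fderiv one_ne_zero).clm_apply continuous_const)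
    exact (hc1.add hc2).continuousOn.integrableOn_compact isCompact_Icc

end Lap4
namespace Lap5
open Lap Lap2 Lap3 Lap4 intervalIntegral

variable {h : E2 → ℝ} (hs : ContDiff ℝ 2 h) {t : ℝ}

def mEq : (ℝ × ℝ) ≃ᵐ E2 :=
  (MeasurableEquiv.finTwoArrow (α := ℝ)).symm.trans
    (MeasurableEquiv.toLp 2 (Fin 2 → ℝ))

lemma mEq_measurePreserving : MeasurePreserving mEq := by
  exact ((volume_preserving_finTwoArrow ℝ).symm _).trans
    ((EuclideanSpace.volume_preserving_symm_measurableEquiv_toLp (Fin 2)).symm _)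

lemma mEq_apply (p : ℝ × ℝ) : mEq p = p.1 • e0 + p.2 • e1 := by
  ext i
  have hc : (p.1 • e0 + p.2 • e1 : E2) i = ![p.1, p.2] i := by
    fin_cases i
    · show (p.1 • e0 + p.2 • e1 : E2) 0 = p.1
      exact coord0 _ _
    · show (p.1 • e0 + p.2 • e1 : E2) 1 = p.2
      exact coord1 _ _
  rw [hc]
  rfl

lemma P_eq_smul (p : ℝ × ℝ) : P p = (p.1 * Real.cos p.2) • e0 + (p.1 * Real.sin p.2) • e1 := by
  unfold P om
  module

lemma norm_P (p : ℝ × ℝ) : ‖P p‖ = |p.1| := by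
  unfold P
  rw [norm_smul, norm_om, Real.norm_eq_abs, mul_one]

include hs

lemma ball_to_polar (ht : 0 < t) :
    ∫ x in Metric.closedBall (0 : E2) t, euclideanLaplacian h x
      = ∫ p in Icc ((0:ℝ), -π) (t, π), p.1 * euclideanLaplacian h (P p) := by
  set L := euclideanLaplacian h with hL
  have h1 : ∫ x in Metric.closedBall (0 : E2) t, L x
      = ∫ x, Set.indicator (Metric.closedBall (0:E2) t) L x :=
    (MeasureTheory.integral_indicator measurableSet_closedBall).symm
  have h2 : ∫ x, Set.indicator (Metric.closedBall (0:E2) t) L x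
      = ∫ p : ℝ × ℝ, Set.indicator (Metric.closedBall (0:E2) t) L (mEq p) :=
    (mEq_measurePreserving.integral_comp mEq.measurableEmbedding _).symm
  have h3 := (integral_comp_polarCoord_symm
    (fun p => Set.indicator (Metric.closedBall (0:E2) t) L (mEq p))).symm
  have hkey : ∀ p ∈ polarCoord.target,
      p.1 • Set.indicator (Metric.closedBall (0:E2) t) L (mEq (polarCoord.symm p))
        = Set.indicator (Iic t ×ˢ (univ : Set ℝ)) (fun p => p.1 * L (P p)) p := by
    rintro ⟨r, θ⟩ hp
    have hr : 0 < r := hp.1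
    have hmp : mEq (polarCoord.symm (r, θ)) = P (r, θ) := by
      rw [polarCoord_symm_apply, mEq_apply, P_eq_smul]
    have hmem : P (r, θ) ∈ Metric.closedBall (0:E2) t ↔ r ≤ t := by
      rw [Metric.mem_closedBall, dist_zero_right, norm_P, abs_of_pos hr]
    by_cases hrt : r ≤ t
    · rw [Set.indicator_of_mem (by rw [hmp]; exact hmem.2 hrt),
        Set.indicator_of_mem (by exact ⟨hrt, trivial⟩)]
      rw [hmp]
      rfl
    · rw [Set.indicator_of_notMem (by rw [hmp]; exact fun hc => hrt (hmem.1 hc)),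
        Set.indicator_of_notMem (by exact fun hc => hrt hc.1)]
      simp
  have h4 : ∫ p in polarCoord.target,
      p.1 • Set.indicator (Metric.closedBall (0:E2) t) L (mEq (polarCoord.symm p))
      = ∫ p in polarCoord.target,
          Set.indicator (Iic t ×ˢ (univ : Set ℝ)) (fun p => p.1 * L (P p)) p :=
    setIntegral_congr_fun polarCoord.open_target.measurableSet hkey
  have h5 : ∫ p in polarCoord.target,
      Set.indicator (Iic t ×ˢ (univ : Set ℝ)) (fun p => p.1 * L (P p)) p
      = ∫ p in polarCoord.target ∩ (Iic t ×ˢ (univ : Set ℝ)), p.1 * L (P p) :=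
    setIntegral_indicator (measurableSet_Iic.prod MeasurableSet.univ)
  have h6 : polarCoord.target ∩ (Iic t ×ˢ (univ : Set ℝ))
      = Ioc (0:ℝ) t ×ˢ Ioo (-π) π := by
    rw [polarCoord_target, Set.prod_inter_prod, Set.Ioi_inter_Iic, Set.inter_univ]
  have h7 : (Ioc (0:ℝ) t ×ˢ Ioo (-π) π : Set (ℝ × ℝ)) =ᵐ[volume] Icc ((0:ℝ), -π) (t, π) := by
    rw [MeasureTheory.ae_eq_set]
    constructor
    · rw [Set.diff_eq_empty.2]
      · exact measure_empty
      · rw [Set.Icc_prod_eq]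
        exact Set.prod_mono Ioc_subset_Icc_self Ioo_subset_Icc_self
    · apply measure_mono_null
        (t := (({0} : Set ℝ) ×ˢ (univ : Set ℝ)) ∪ ((univ : Set ℝ) ×ˢ ({-π, π} : Set ℝ)))
      · rintro ⟨x, y⟩ ⟨hmem, hnot⟩
        rw [Set.Icc_prod_eq] at hmem
        obtain ⟨hx, hy⟩ := hmem
        rcases eq_or_lt_of_le hx.1 with h0 | h0
        · exact Or.inl ⟨h0.symm, trivial⟩
        · have hxIoc : x ∈ Ioc (0:ℝ) t := ⟨h0, hx.2⟩
          have hyIoo : y ∉ Ioo (-π) π := fun hy' => hnot ⟨hxIoc, hy'⟩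
          refine Or.inr ⟨trivial, ?_⟩
          rcases eq_or_lt_of_le hy.1 with h1 | h1
          · exact Or.inl h1.symm
          · rcases eq_or_lt_of_le hy.2 with h2 | h2
            · exact Or.inr h2
            · exact absurd ⟨h1, h2⟩ hyIoo
      · apply measure_union_null
        · rw [Measure.volume_eq_prod, Measure.prod_prod, Real.volume_singleton, zero_mul]
        · rw [Measure.volume_eq_prod, Measure.prod_prod]
          have : volume ({-π, π} : Set ℝ) = 0 :=
            Set.Finite.measure_zero (Set.toFinite _) _
          rw [this, mul_zero]
  rw [h1, h2, h3, h4, h5, h6]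
  exact setIntegral_congr_set h7

end Lap5
end Lap
end Lap

open MeasureTheory Lap Lap.Lap Lap.Lap.Lap2 Lap.Lap.Lap3 Lap.Lap.Lap4 Lap.Lap.Lap5 Real Set

/-- For a `C²` function `h : ℝ² → ℝ` and `t > 0`, the integral of `Δh` over the
closed ball of radius `t` about the origin is at most the integral of `‖∇h‖`
over the circle of radius `t` about the origin, with respect to the
one-dimensional Hausdorff measure. -/
theorem integral_laplacian_closedBall_le_integral_grad_sphere
    (h : EuclideanSpace ℝ (Fin 2) → ℝ) (hsmooth : ContDiff ℝ 2 h)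
    (t : ℝ) (ht : 0 < t) :
    ∫ x in Metric.closedBall (0 : EuclideanSpace ℝ (Fin 2)) t, euclideanLaplacian h x ≤
      ∫ x in Metric.sphere (0 : EuclideanSpace ℝ (Fin 2)) t, ‖gradient h x‖
        ∂(Measure.hausdorffMeasure 1) := by
  have hgradc : Continuous (gradient h) := by
    have hg : gradient h
        = fun x => (InnerProductSpace.toDual ℝ E2).symm (fderiv ℝ h x) := rfl
    rw [hg]
    exact (LinearIsometryEquiv.continuous _).comp (hsmooth.continuous_fderiv (by norm_num))
  have hinner : ∀ (x v : E2), inner ℝ (gradient h x) v = fderiv ℝ h x v := fun x v =>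
    InnerProductSpace.toDual_symm_apply
  have int1 : IntervalIntegrable (fun y => ff h (t, y)) volume (-π) π :=
    ((contDiff_ff hsmooth).continuous.comp
      (continuous_const.prodMk continuous_id)).intervalIntegrable _ _
  have int2 : IntervalIntegrable (fun y => t * ‖gradient h (q t y)‖) volume (-π) π :=
    (continuous_const.mul (hgradc.norm.comp (continuous_q t))).intervalIntegrable _ _
  have hpi : -π ≤ π := by linarith [Real.pi_pos]
  calc ∫ x in Metric.closedBall (0 : EuclideanSpace ℝ (Fin 2)) t, euclideanLaplacian h x
      = ∫ p in Icc ((0:ℝ), -π) (t, π), p.1 * euclideanLaplacian h (P p) :=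
        ball_to_polar hsmooth ht
  _ = ∫ y in (-π)..π, ff h (t, y) := divergence_eq hsmooth ht
  _ ≤ ∫ y in (-π)..π, t * ‖gradient h (q t y)‖ := by
      apply intervalIntegral.integral_mono_on hpi int1 int2
      intro y _
      show t * fderiv ℝ h (P (t, y)) (om y) ≤ _
      have hPq : P (t, y) = q t y := rfl
      rw [hPq, ← hinner]
      have := real_inner_le_norm (gradient h (q t y)) (om y)
      rw [norm_om, mul_one] at this
      exact mul_le_mul_of_nonneg_left this ht.le
  _ = t * ∫ y in (-π)..π, ‖gradient h (q t y)‖ := intervalIntegral.integral_const_mul _ _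
  _ = t * ∫ y in Ioc (-π) π, ‖gradient h (q t y)‖ := by
      rw [intervalIntegral.integral_of_le hpi]
  _ ≤ ∫ x in Metric.sphere (0 : E2) t, ‖gradient h x‖ ∂μH[(1:ℝ)] :=
      sphere_integral_ge' ht _ hgradc.norm (fun x => norm_nonneg _)

end
end
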